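/- In Exel's semigroup S(G) of a group G, setting e_g := [g][g^{-1}], for all g, h ∈ G one has [g] e_h = e_{gh} [g]. -/

import Mathlib

/-- The defining relations of Exel's semigroup `S(G)` of a group `G`:
`[1] = 1`, `[s⁻¹][s][t] = [s⁻¹][st]`, `[s][t][t⁻¹] = [st][t⁻¹]`. -/
inductive ExelRel (G : Type*) [Group G] : FreeMonoid G → FreeMonoid G → Prop
  | one : ExelRel G (FreeMonoid.of 1) 1
  | left (s t : G) : ExelRel G
      (FreeMonoid.of s⁻¹ * FreeMonoid.of s * FreeMonoid.of t)
      (FreeMonoid.of s⁻¹ * FreeMonoid.of (s * t))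
  | right (s t : G) : ExelRel G
      (FreeMonoid.of s * FreeMonoid.of t * FreeMonoid.of t⁻¹)
      (FreeMonoid.of (s * t) * FreeMonoid.of t⁻¹)

/-- The congruence on the free monoid on `G` generated by the Exel relations. -/
def ExelCon (G : Type*) [Group G] : Con (FreeMonoid G) := conGen (ExelRel G)

/-- Exel's semigroup (an inverse monoid) `S(G)` of the group `G`. -/
abbrev ExelMonoid (G : Type*) [Group G] := (ExelCon G).Quotient

/-- The canonical generator `[g]` of `S(G)`. -/
def ExelMonoid.of {G : Type*} [Group G] (g : G) : ExelMonoid G :=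
  (ExelCon G).mk' (FreeMonoid.of g)

/-- The idempotent `e_g := [g][g⁻¹]` in `S(G)`. -/
def ExelMonoid.e {G : Type*} [Group G] (g : G) : ExelMonoid G :=
  ExelMonoid.of g * ExelMonoid.of g⁻¹

/-- In Exel's semigroup `S(G)`, for all `g h : G` one has `[g] e_h = e_{gh} [g]`. -/
theorem exel_of_mul_e {G : Type*} [Group G] (g h : G) :
    ExelMonoid.of g * ExelMonoid.e h = ExelMonoid.e (g * h) * ExelMonoid.of g := by
  have h1 : ExelCon G (FreeMonoid.of g * FreeMonoid.of h * FreeMonoid.of h⁻¹)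
      (FreeMonoid.of (g * h) * FreeMonoid.of h⁻¹) :=
    ConGen.Rel.of _ _ (ExelRel.right g h)
  have h2 : ExelCon G (FreeMonoid.of (g * h) * FreeMonoid.of (g * h)⁻¹ * FreeMonoid.of g)
      (FreeMonoid.of (g * h) * FreeMonoid.of h⁻¹) := by
    have := ConGen.Rel.of _ _ (ExelRel.left (G := G) (g * h)⁻¹ g)
    simp [mul_assoc, mul_inv_rev] at this ⊢; exact this
  simp only [ExelMonoid.e, ExelMonoid.of, ← map_mul]
  exact (ExelCon G).eq.2 ((ExelCon G).trans (by simpa [mul_assoc] using h1) ((ExelCon G).symm h2))
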